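/- For the complete bipartite graph K_{2,ℓ} (as a hypergraph whose hyperedges are its edges), there is an embedding of the (2ℓ−1)-clique into K_{2,ℓ} with weak edge depth ℓ; hence emb(K_{2,ℓ}) ≥ 2 − 1/ℓ. -/

import Mathlib

open Finset

structure Hypergraph' (V : Type*) [DecidableEq V] [Fintype V] where
  edges : Finset (Finset V)

namespace Hypergraph'

variable {V : Type*} [DecidableEq V] [Fintype V]

/-- Two vertex sets touch in `H`: they intersect, or some hyperedge meets both. -/
def touch (H : Hypergraph' V) (S T : Finset V) : Prop :=
  (S ∩ T).Nonempty ∨ ∃ e ∈ H.edges, (e ∩ S).Nonempty ∧ (e ∩ T).Nonempty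

/-- `S` induces a connected subhypergraph of `H`. -/
def connSet (H : Hypergraph' V) (S : Finset V) : Prop :=
  ∀ a ∈ S, ∀ b ∈ S,
    Relation.ReflTransGen (fun x y => x ∈ S ∧ y ∈ S ∧ ∃ e ∈ H.edges, x ∈ e ∧ y ∈ e) a b

/-- An embedding of the `k`-clique into the hypergraph `H`. -/
def IsCliqueEmb (H : Hypergraph' V) (k : ℕ) (ψ : Fin k → Finset V) : Prop :=
  (∀ i, (ψ i).Nonempty) ∧ (∀ i, H.connSet (ψ i)) ∧
    ∀ i j : Fin k, i ≠ j → H.touch (ψ i) (ψ j)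

/-- The weak edge depth of an embedding: the max over hyperedges `e` of the number
of clique vertices whose image meets `e`. -/
def wedOf (H : Hypergraph' V) {k : ℕ} (ψ : Fin k → Finset V) : ℕ :=
  H.edges.sup fun e => (Finset.univ.filter fun i : Fin k => ((ψ i) ∩ e).Nonempty).card

/-- `wed (C_k ↦ H)`: the minimum weak edge depth over embeddings of the `k`-clique. -/
noncomputable def wed (H : Hypergraph' V) (k : ℕ) : ℕ :=
  sInf {w | ∃ ψ : Fin k → Finset V, H.IsCliqueEmb k ψ ∧ H.wedOf ψ ≤ w}

end Hypergraph'

/-- A tree decomposition of a hypergraph. -/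
structure IsTreeDecomp {V : Type*} [DecidableEq V] [Fintype V] {ι : Type*}
    (H : Hypergraph' V) (T : SimpleGraph ι) (χ : ι → Finset V) : Prop where
  tree : T.IsTree
  covers : ∀ e ∈ H.edges, ∃ t, e ⊆ χ t
  conn : ∀ v : V, (T.induce {t | v ∈ χ t}).Connected

/-- The clique embedding power of a hypergraph. -/
noncomputable def embPower {V : Type*} [DecidableEq V] [Fintype V] (H : Hypergraph' V) : ℝ :=
  sSup {x : ℝ | ∃ k : ℕ, 3 ≤ k ∧ x = (k : ℝ) / (H.wed k : ℝ)}

/-- The complete bipartite graph `K_{2,ℓ}` as a hypergraph: vertices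
`Fin 2 ⊕ Fin ℓ`, hyperedges the edges `{x_a, y_i}`. -/
def K2l (ℓ : ℕ) : Hypergraph' (Fin 2 ⊕ Fin ℓ) :=
  ⟨Finset.univ.image fun p : Fin 2 × Fin ℓ =>
    ({Sum.inl p.1, Sum.inr p.2} : Finset (Fin 2 ⊕ Fin ℓ))⟩

-- AUXILIARY

namespace K2lAux

lemma mem_K2l_edges {ℓ : ℕ} (a : Fin 2) (i : Fin ℓ) :
    ({Sum.inl a, Sum.inr i} : Finset (Fin 2 ⊕ Fin ℓ)) ∈ (K2l ℓ).edges :=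
  Finset.mem_image.2 ⟨(a, i), Finset.mem_univ _, rfl⟩

/-- Every vertex of `K2l` lies in some hyperedge (for `ℓ ≥ 1`). -/
lemma exists_edge_mem {ℓ : ℕ} (hℓ : 1 ≤ ℓ) (x : Fin 2 ⊕ Fin ℓ) :
    ∃ e ∈ (K2l ℓ).edges, x ∈ e := by
  cases x with
  | inl a => exact ⟨{Sum.inl a, Sum.inr ⟨0, by omega⟩}, mem_K2l_edges _ _, by simp⟩
  | inr b => exact ⟨{Sum.inl 0, Sum.inr b}, mem_K2l_edges _ _, by simp⟩

/-- For any embedding of `C_k` into `K2l ℓ`, `k ≤ 2ℓ·wedOf`. -/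
lemma k_le_mul_wedOf {ℓ k : ℕ} (hℓ : 1 ≤ ℓ) (ψ : Fin k → Finset (Fin 2 ⊕ Fin ℓ))
    (hemb : (K2l ℓ).IsCliqueEmb k ψ) : k ≤ 2 * ℓ * (K2l ℓ).wedOf ψ := by
  have hsub : (Finset.univ : Finset (Fin k)) ⊆
      (K2l ℓ).edges.biUnion (fun e => Finset.univ.filter fun i => ((ψ i) ∩ e).Nonempty) := by
    intro i _
    obtain ⟨x, hx⟩ := hemb.1 i
    obtain ⟨e, he, hxe⟩ := exists_edge_mem hℓ x
    exact Finset.mem_biUnion.2 ⟨e, he, Finset.mem_filter.2 ⟨Finset.mem_univ _,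
      ⟨x, Finset.mem_inter.2 ⟨hx, hxe⟩⟩⟩⟩
  have h1 : k ≤ ∑ e ∈ (K2l ℓ).edges,
      (Finset.univ.filter fun i : Fin k => ((ψ i) ∩ e).Nonempty).card := by
    calc k = (Finset.univ : Finset (Fin k)).card := by simp
    _ ≤ _ := le_trans (Finset.card_le_card hsub) (Finset.card_biUnion_le)
  have h2 : ∑ e ∈ (K2l ℓ).edges,
      (Finset.univ.filter fun i : Fin k => ((ψ i) ∩ e).Nonempty).card
      ≤ (K2l ℓ).edges.card • (K2l ℓ).wedOf ψ :=
    Finset.sum_le_card_nsmul _ _ _ (fun e he => Finset.le_sup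
      (f := fun e => (Finset.univ.filter fun i : Fin k => ((ψ i) ∩ e).Nonempty).card) he)
  have h3 : (K2l ℓ).edges.card ≤ 2 * ℓ := by
    calc (K2l ℓ).edges.card ≤ (Finset.univ : Finset (Fin 2 × Fin ℓ)).card :=
      Finset.card_image_le
    _ = 2 * ℓ := by simp
  calc k ≤ (K2l ℓ).edges.card • (K2l ℓ).wedOf ψ := le_trans h1 h2
  _ = (K2l ℓ).edges.card * (K2l ℓ).wedOf ψ := by simp
  _ ≤ 2 * ℓ * (K2l ℓ).wedOf ψ := Nat.mul_le_mul_right _ h3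

/-- The image sets of the embedding. -/
def psi (ℓ : ℕ) (hℓ : 2 ≤ ℓ) : Fin (2 * ℓ - 1) → Finset (Fin 2 ⊕ Fin ℓ) := fun j =>
  if _ : j.val < ℓ - 1 then {Sum.inl 0, Sum.inr ⟨j.val, by omega⟩}
  else if _ : j.val < 2 * ℓ - 2 then {Sum.inl 1, Sum.inr ⟨j.val - (ℓ - 1), by omega⟩}
  else {Sum.inr ⟨ℓ - 1, by omega⟩}

lemma inl_mem_psi {ℓ : ℕ} (hℓ : 2 ≤ ℓ) (j : Fin (2 * ℓ - 1)) (a : Fin 2) :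
    Sum.inl a ∈ psi ℓ hℓ j ↔
      (j.val < ℓ - 1 ∧ a.val = 0) ∨ (ℓ - 1 ≤ j.val ∧ j.val < 2 * ℓ - 2 ∧ a.val = 1) := by
  unfold psi
  split_ifs with h1 h2 <;> simp [Fin.ext_iff, -Fin.val_eq_zero_iff] <;> omega

lemma inr_mem_psi {ℓ : ℕ} (hℓ : 2 ≤ ℓ) (j : Fin (2 * ℓ - 1)) (t : Fin ℓ) :
    Sum.inr t ∈ psi ℓ hℓ j ↔
      (j.val < ℓ - 1 ∧ t.val = j.val) ∨
      (ℓ - 1 ≤ j.val ∧ j.val < 2 * ℓ - 2 ∧ t.val + (ℓ - 1) = j.val) ∨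
      (j.val = 2 * ℓ - 2 ∧ t.val = ℓ - 1) := by
  have hj := j.isLt
  unfold psi
  split_ifs with h1 h2 <;> simp [Fin.ext_iff] <;> omega

lemma psi_nonempty {ℓ : ℕ} (hℓ : 2 ≤ ℓ) (j : Fin (2 * ℓ - 1)) : (psi ℓ hℓ j).Nonempty := by
  unfold psi; split_ifs <;> simp

lemma psi_subset_edge {ℓ : ℕ} (hℓ : 2 ≤ ℓ) (j : Fin (2 * ℓ - 1)) :
    ∃ e ∈ (K2l ℓ).edges, psi ℓ hℓ j ⊆ e := by
  unfold psi
  split_ifs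
  · exact ⟨_, mem_K2l_edges _ _, subset_rfl⟩
  · exact ⟨_, mem_K2l_edges _ _, subset_rfl⟩
  · exact ⟨{Sum.inl 0, Sum.inr ⟨ℓ - 1, by omega⟩}, mem_K2l_edges _ _, by
      intro x hx; simp only [Finset.mem_singleton] at hx; simp [hx]⟩

lemma exists_inr_mem {ℓ : ℕ} (hℓ : 2 ≤ ℓ) (j : Fin (2 * ℓ - 1)) :
    ∃ b : Fin ℓ, Sum.inr b ∈ psi ℓ hℓ j := by
  unfold psi
  split_ifs
  · exact ⟨_, Finset.mem_insert_of_mem (Finset.mem_singleton_self _)⟩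
  · exact ⟨_, Finset.mem_insert_of_mem (Finset.mem_singleton_self _)⟩
  · exact ⟨_, Finset.mem_singleton_self _⟩

lemma exists_inl_mem {ℓ : ℕ} (hℓ : 2 ≤ ℓ) (j : Fin (2 * ℓ - 1)) (hj : j.val ≠ 2 * ℓ - 2) :
    ∃ a : Fin 2, Sum.inl a ∈ psi ℓ hℓ j := by
  have := j.isLt
  unfold psi
  split_ifs with h1 h2
  · exact ⟨0, by simp⟩
  · exact ⟨1, by simp⟩
  · omega

lemma touch_of_mem {ℓ : ℕ} {S T : Finset (Fin 2 ⊕ Fin ℓ)} {a : Fin 2} {b : Fin ℓ}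
    (hS : Sum.inl a ∈ S) (hT : Sum.inr b ∈ T) : (K2l ℓ).touch S T :=
  Or.inr ⟨{Sum.inl a, Sum.inr b}, mem_K2l_edges a b,
    ⟨Sum.inl a, Finset.mem_inter.2 ⟨by simp, hS⟩⟩,
    ⟨Sum.inr b, Finset.mem_inter.2 ⟨by simp, hT⟩⟩⟩

lemma psi_isCliqueEmb {ℓ : ℕ} (hℓ : 2 ≤ ℓ) :
    (K2l ℓ).IsCliqueEmb (2 * ℓ - 1) (psi ℓ hℓ) := by
  refine ⟨psi_nonempty hℓ, ?_, ?_⟩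
  · intro j
    obtain ⟨e, he, hsub⟩ := psi_subset_edge hℓ j
    intro a ha b hb
    exact Relation.ReflTransGen.single ⟨ha, hb, e, he, hsub ha, hsub hb⟩
  · intro i j hij
    by_cases hi : i.val = 2 * ℓ - 2
    · have hj : j.val ≠ 2 * ℓ - 2 := fun h => hij (Fin.ext (by omega))
      obtain ⟨a, ha⟩ := exists_inl_mem hℓ j hj
      obtain ⟨b, hb⟩ := exists_inr_mem hℓ i
      exact Or.inr ⟨{Sum.inl a, Sum.inr b}, mem_K2l_edges a b,
        ⟨Sum.inr b, Finset.mem_inter.2 ⟨by simp, hb⟩⟩,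
        ⟨Sum.inl a, Finset.mem_inter.2 ⟨by simp, ha⟩⟩⟩
    · obtain ⟨a, ha⟩ := exists_inl_mem hℓ i hi
      obtain ⟨b, hb⟩ := exists_inr_mem hℓ j
      exact touch_of_mem ha hb

lemma inter_pair_nonempty {V : Type*} [DecidableEq V] {S : Finset V} {u v : V} :
    (S ∩ ({u, v} : Finset V)).Nonempty ↔ u ∈ S ∨ v ∈ S := by
  constructor
  · rintro ⟨x, hx⟩
    rw [Finset.mem_inter, Finset.mem_insert, Finset.mem_singleton] at hx
    rcases hx with ⟨hxS, rfl | rfl⟩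
    · exact Or.inl hxS
    · exact Or.inr hxS
  · rintro (h | h)
    · exact ⟨u, Finset.mem_inter.2 ⟨h, by simp⟩⟩
    · exact ⟨v, Finset.mem_inter.2 ⟨h, by simp⟩⟩

lemma psi_wedOf_le {ℓ : ℕ} (hℓ : 2 ≤ ℓ) : (K2l ℓ).wedOf (psi ℓ hℓ) ≤ ℓ := by
  apply Finset.sup_le
  intro e he
  obtain ⟨⟨a, t⟩, -, rfl⟩ := Finset.mem_image.1 he
  have key : ∀ j : Fin (2 * ℓ - 1),
      ((psi ℓ hℓ j) ∩ ({Sum.inl a, Sum.inr t} : Finset (Fin 2 ⊕ Fin ℓ))).Nonempty ↔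
      ((j.val < ℓ - 1 ∧ a.val = 0) ∨ (ℓ - 1 ≤ j.val ∧ j.val < 2 * ℓ - 2 ∧ a.val = 1)) ∨
      ((j.val < ℓ - 1 ∧ t.val = j.val) ∨
        (ℓ - 1 ≤ j.val ∧ j.val < 2 * ℓ - 2 ∧ t.val + (ℓ - 1) = j.val) ∨
        (j.val = 2 * ℓ - 2 ∧ t.val = ℓ - 1)) := by
    intro j
    rw [inter_pair_nonempty, inl_mem_psi hℓ, inr_mem_psi hℓ]
  have ht := t.isLt
  have hcard : ∀ j : Fin (2 * ℓ - 1), True := fun _ => trivial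
  -- injection into Fin ℓ, depending on a
  rcases (by omega : a.val = 0 ∨ a.val = 1) with ha | ha
  · -- f j = j if j < ℓ-1, else ℓ-1
    have := Finset.card_le_card_of_injOn
      (f := fun j : Fin (2 * ℓ - 1) =>
        if h : j.val < ℓ - 1 then (⟨j.val, by omega⟩ : Fin ℓ) else ⟨ℓ - 1, by omega⟩)
      (s := Finset.univ.filter fun j : Fin (2 * ℓ - 1) =>
        ((psi ℓ hℓ j) ∩ ({Sum.inl a, Sum.inr t} : Finset (Fin 2 ⊕ Fin ℓ))).Nonempty)
      (t := (Finset.univ : Finset (Fin ℓ)))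
      (fun _ _ => Finset.mem_univ _) ?_
    · simpa using this
    · intro j1 hj1 j2 hj2 heq
      simp only [Finset.coe_filter, Set.mem_setOf_eq, Finset.mem_univ, true_and] at hj1 hj2
      rw [key] at hj1 hj2
      apply Fin.ext
      dsimp only at heq
      split_ifs at heq with h1 h2 h2 <;> rw [Fin.mk.injEq] at heq <;>
        rcases hj1 with (⟨_,_⟩|⟨_,_,_⟩)|(⟨_,_⟩|⟨_,_,_⟩|⟨_,_⟩) <;>
        rcases hj2 with (⟨_,_⟩|⟨_,_,_⟩)|(⟨_,_⟩|⟨_,_,_⟩|⟨_,_⟩) <;> omega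
  · -- f j = j - (ℓ-1) if ℓ-1 ≤ j < 2ℓ-2, else ℓ-1
    have := Finset.card_le_card_of_injOn
      (f := fun j : Fin (2 * ℓ - 1) =>
        if h : ℓ - 1 ≤ j.val ∧ j.val < 2 * ℓ - 2 then
          (⟨j.val - (ℓ - 1), by omega⟩ : Fin ℓ) else ⟨ℓ - 1, by omega⟩)
      (s := Finset.univ.filter fun j : Fin (2 * ℓ - 1) =>
        ((psi ℓ hℓ j) ∩ ({Sum.inl a, Sum.inr t} : Finset (Fin 2 ⊕ Fin ℓ))).Nonempty)
      (t := (Finset.univ : Finset (Fin ℓ)))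
      (fun _ _ => Finset.mem_univ _) ?_
    · simpa using this
    · intro j1 hj1 j2 hj2 heq
      simp only [Finset.coe_filter, Set.mem_setOf_eq, Finset.mem_univ, true_and] at hj1 hj2
      rw [key] at hj1 hj2
      apply Fin.ext
      dsimp only at heq
      split_ifs at heq with h1 h2 h2 <;> rw [Fin.mk.injEq] at heq <;>
        rcases hj1 with (⟨_,_⟩|⟨_,_,_⟩)|(⟨_,_⟩|⟨_,_,_⟩|⟨_,_⟩) <;>
        rcases hj2 with (⟨_,_⟩|⟨_,_,_⟩)|(⟨_,_⟩|⟨_,_,_⟩|⟨_,_⟩) <;> omega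

end K2lAux

/-- There is an embedding of the `(2ℓ−1)`-clique into `K_{2,ℓ}` with weak edge
depth `ℓ`; hence `emb(K_{2,ℓ}) ≥ 2 − 1/ℓ`. -/
theorem K2l_emb_lower_bound (ℓ : ℕ) (hℓ : 2 ≤ ℓ) :
    (∃ ψ : Fin (2 * ℓ - 1) → Finset (Fin 2 ⊕ Fin ℓ),
      (K2l ℓ).IsCliqueEmb (2 * ℓ - 1) ψ ∧ (K2l ℓ).wedOf ψ ≤ ℓ) ∧
    (2 : ℝ) - 1 / (ℓ : ℝ) ≤ embPower (K2l ℓ) := by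

  open K2lAux in
  have hpart1 : ∃ ψ : Fin (2 * ℓ - 1) → Finset (Fin 2 ⊕ Fin ℓ),
      (K2l ℓ).IsCliqueEmb (2 * ℓ - 1) ψ ∧ (K2l ℓ).wedOf ψ ≤ ℓ :=
    ⟨K2lAux.psi ℓ hℓ, K2lAux.psi_isCliqueEmb hℓ, K2lAux.psi_wedOf_le hℓ⟩
  refine ⟨hpart1, ?_⟩
  have hℓ1 : (1 : ℕ) ≤ ℓ := by omega
  -- the wed set for k = 2ℓ-1
  set k := 2 * ℓ - 1 with hk
  have hSne : ℓ ∈ {w | ∃ ψ : Fin k → Finset (Fin 2 ⊕ Fin ℓ),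
      (K2l ℓ).IsCliqueEmb k ψ ∧ (K2l ℓ).wedOf ψ ≤ w} := hpart1
  have hwle : (K2l ℓ).wed k ≤ ℓ := Nat.sInf_le hSne
  have hwmem := Nat.sInf_mem (⟨ℓ, hSne⟩ :
    {w | ∃ ψ : Fin k → Finset (Fin 2 ⊕ Fin ℓ),
      (K2l ℓ).IsCliqueEmb k ψ ∧ (K2l ℓ).wedOf ψ ≤ w}.Nonempty)
  obtain ⟨ψ₀, hψ₀, hψ₀w⟩ := hwmem
  have hklb : k ≤ 2 * ℓ * (K2l ℓ).wed k :=
    le_trans (K2lAux.k_le_mul_wedOf hℓ1 ψ₀ hψ₀) (Nat.mul_le_mul_left _ hψ₀w)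
  have hwpos : 1 ≤ (K2l ℓ).wed k := by
    by_contra h
    have : (K2l ℓ).wed k = 0 := by omega
    rw [this] at hklb
    omega
  -- bddAbove of the embPower set, bound 2ℓ
  have hbdd : BddAbove {x : ℝ | ∃ k' : ℕ, 3 ≤ k' ∧ x = (k' : ℝ) / ((K2l ℓ).wed k' : ℝ)} := by
    refine ⟨2 * ℓ, ?_⟩
    rintro x ⟨k', hk', rfl⟩
    by_cases hS : {w | ∃ ψ : Fin k' → Finset (Fin 2 ⊕ Fin ℓ),
        (K2l ℓ).IsCliqueEmb k' ψ ∧ (K2l ℓ).wedOf ψ ≤ w}.Nonempty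
    · obtain ⟨ψ', hψ', hψ'w⟩ := Nat.sInf_mem hS
      have h1 : k' ≤ 2 * ℓ * (K2l ℓ).wed k' :=
        le_trans (K2lAux.k_le_mul_wedOf hℓ1 ψ' hψ') (Nat.mul_le_mul_left _ hψ'w)
      have h2 : 1 ≤ (K2l ℓ).wed k' := by
        by_contra h
        have : (K2l ℓ).wed k' = 0 := by omega
        rw [this] at h1; omega
      rw [div_le_iff₀ (by positivity)]
      calc (k' : ℝ) ≤ ((2 * ℓ * (K2l ℓ).wed k' : ℕ) : ℝ) := by exact_mod_cast h1
      _ = 2 * (ℓ : ℝ) * ((K2l ℓ).wed k' : ℝ) := by push_cast; ring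
      _ = 2 * (ℓ : ℝ) * ((K2l ℓ).wed k' : ℝ) := rfl
    · have : (K2l ℓ).wed k' = 0 := by
        unfold Hypergraph'.wed
        rw [Set.not_nonempty_iff_eq_empty.1 hS, Nat.sInf_empty]
      rw [this]
      simp
  have hmem : ((k : ℕ) : ℝ) / ((K2l ℓ).wed k : ℝ) ∈
      {x : ℝ | ∃ k' : ℕ, 3 ≤ k' ∧ x = (k' : ℝ) / ((K2l ℓ).wed k' : ℝ)} :=
    ⟨k, by omega, rfl⟩
  have hle : ((k : ℕ) : ℝ) / ((K2l ℓ).wed k : ℝ) ≤ embPower (K2l ℓ) :=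
    le_csSup hbdd hmem
  refine le_trans ?_ hle
  have hkcast : ((k : ℕ) : ℝ) = 2 * (ℓ : ℝ) - 1 := by
    have : (k : ℕ) = 2 * ℓ - 1 := hk
    rw [this]
    push_cast [Nat.cast_sub (by omega : 1 ≤ 2 * ℓ)]
    ring
  have hwpos' : (0 : ℝ) < ((K2l ℓ).wed k : ℝ) := by exact_mod_cast hwpos
  have hwle' : ((K2l ℓ).wed k : ℝ) ≤ (ℓ : ℝ) := by exact_mod_cast hwle
  have hstep : (2 * (ℓ : ℝ) - 1) / (ℓ : ℝ) ≤ (2 * (ℓ : ℝ) - 1) / ((K2l ℓ).wed k : ℝ) :=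
    div_le_div_of_nonneg_left (by
      have : (2 : ℝ) ≤ (ℓ : ℝ) := by exact_mod_cast hℓ
      linarith) hwpos' hwle'
  rw [hkcast]
  refine le_trans ?_ hstep
  have hℓpos : (0 : ℝ) < (ℓ : ℝ) := by positivity
  have heqd : (2 : ℝ) - 1 / (ℓ : ℝ) = (2 * (ℓ : ℝ) - 1) / (ℓ : ℝ) := by
    field_simp
  rw [heqd]
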